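/- Let P be a poset and E a convergence class on P satisfying: (i) for all x ≤ y in P, the pair (constant net y, x) belongs to E; and (ii) every (D, x) ∈ E consists of a directed subset D of P (viewed as a monotone net) and a point x in D^δ, where D^δ is the set of lower bounds of the set of upper bounds of D. Then the specialization order of the topological space (P, E(P)) coincides with the original partial order of P. -/
import Mathlib


/-- Let `P` be a poset and `E` a convergence class consisting of pairs `(D, x)` of
directed subsets (viewed as monotone nets) and points, such that
(i) for all `x ≤ y`, the pair `({y}, x)` belongs to `E`, and
(ii) every `(D, x) ∈ E` has `D` directed and `x ∈ D^δ = (D^↑)^↓`.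
Then the specialization order of `(P, E(P))` coincides with the order of `P`. -/
theorem stmt4 {P : Type} [PartialOrder P]
    (E : Set (Set P × P))
    (hconst : ∀ x y : P, x ≤ y → (({y} : Set P), x) ∈ E)
    (hdir : ∀ p ∈ E, (p.1.Nonempty ∧ DirectedOn (· ≤ ·) p.1) ∧
      p.2 ∈ lowerBounds (upperBounds p.1))
    (T : TopologicalSpace P)
    (hT : ∀ U : Set P, T.IsOpen U ↔
      ∀ p ∈ E, p.2 ∈ U → ∃ d ∈ p.1, ∀ e ∈ p.1, d ≤ e → e ∈ U) :
    ∀ x y : P, x ∈ @closure P T {y} ↔ x ≤ y := by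
  intro x y
  letI := T
  constructor
  · intro hx
    by_contra hxy
    have hopen : T.IsOpen {z : P | ¬ z ≤ y} := by
      rw [hT]
      rintro ⟨D, x'⟩ hp hx'
      by_contra hno
      push_neg at hno
      have hub : y ∈ upperBounds D := by
        intro d hd
        obtain ⟨e, he, hde, hey⟩ := hno d hd
        simp only [Set.mem_setOf_eq, not_not] at hey
        exact hde.trans hey
      exact hx' ((hdir _ hp).2 hub)
    have := mem_closure_iff.mp hx _ hopen hxy
    obtain ⟨z, hz, hz'⟩ := this
    exact hz (le_of_eq hz')
  · intro hxy
    rw [mem_closure_iff]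
    intro U hU hxU
    obtain ⟨d, hd, hall⟩ := (hT U).mp hU _ (hconst x y hxy) hxU
    exact ⟨y, hall y rfl (le_of_eq hd), rfl⟩
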